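/- For density matrices ρ and σ on a finite-dimensional Hilbert space, and the measurement effect M₊ given by the projector onto the positive eigenspace of ρ − σ, the success probability (1/2)[tr(ρM₊) + tr(σ(I − M₊))] equals 1/2 + (1/4)‖ρ − σ‖₁, and this is the maximum over all effects 0 ≤ M ≤ I of (1/2)[tr(ρM) + tr(σ(I − M))]. -/

import Mathlib

open Matrix ComplexOrder

/-- Trace norm of a complex matrix: `‖A‖₁ = tr √(Aᴴ A)`. -/
noncomputable def traceNorm {d : ℕ} (A : Matrix (Fin d) (Fin d) ℂ) : ℝ :=
  (((Matrix.posSemidef_conjTranspose_mul_self A).1.eigenvectorUnitary : Matrix (Fin d) (Fin d) ℂ) *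
    Matrix.diagonal (((↑) : ℝ → ℂ) ∘ Real.sqrt ∘ (Matrix.posSemidef_conjTranspose_mul_self A).1.eigenvalues) *
    (star (Matrix.posSemidef_conjTranspose_mul_self A).1.eigenvectorUnitary :
      Matrix (Fin d) (Fin d) ℂ)).trace.re

/-- Helstrom bound: the projector onto the positive eigenspace of `ρ − σ` achieves
success probability `1/2 + ‖ρ − σ‖₁/4` in discriminating two equiprobable states,
and this is optimal among all effects `0 ≤ M ≤ 1`. -/
theorem helstrom_bound {d : ℕ} (ρ σ : Matrix (Fin d) (Fin d) ℂ)
    (hρ : ρ.PosSemidef) (hρ1 : ρ.trace = 1)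
    (hσ : σ.PosSemidef) (hσ1 : σ.trace = 1)
    (h : (ρ - σ).IsHermitian)
    (Mp : Matrix (Fin d) (Fin d) ℂ)
    (hMp : Mp = (h.eigenvectorUnitary : Matrix (Fin d) (Fin d) ℂ) *
      Matrix.diagonal (fun i => if 0 < h.eigenvalues i then (1:ℂ) else 0) *
      (h.eigenvectorUnitary : Matrix (Fin d) (Fin d) ℂ)ᴴ) :
    (1/2 : ℂ) * ((ρ * Mp).trace + (σ * (1 - Mp)).trace)
        = ((1/2 + 1/4 * traceNorm (ρ - σ) : ℝ) : ℂ) ∧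
    ∀ M : Matrix (Fin d) (Fin d) ℂ, M.PosSemidef → (1 - M).PosSemidef →
      ((1/2 : ℂ) * ((ρ * M).trace + (σ * (1 - M)).trace)).re
        ≤ 1/2 + 1/4 * traceNorm (ρ - σ) := by
  set U := (h.eigenvectorUnitary : Matrix (Fin d) (Fin d) ℂ) with hU
  set lam := h.eigenvalues with hlam
  have hUU : Uᴴ * U = 1 := by
    simpa [Matrix.star_eq_conjTranspose] using
      (Matrix.mem_unitaryGroup_iff').mp h.eigenvectorUnitary.2
  have hspec : ρ - σ = U * Matrix.diagonal (fun i => (lam i : ℂ)) * Uᴴ := by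
    exact h.spectral_theorem
  have hdtr : ∀ (f : Fin d → ℂ) (N : Matrix (Fin d) (Fin d) ℂ),
      (Matrix.diagonal f * N).trace = ∑ i, f i * N i i := by
    intro f N; simp [Matrix.trace, Matrix.diag, Matrix.mul_apply, Matrix.diagonal]
  -- generic trace formula
  have key : ∀ B : Matrix (Fin d) (Fin d) ℂ,
      ((ρ - σ) * B).trace = ∑ i, (lam i : ℂ) * ((Uᴴ * B * U) i i) := by
    intro B
    conv_lhs => rw [hspec]
    rw [mul_assoc, Matrix.trace_mul_comm, ← mul_assoc, Matrix.trace_mul_comm, hdtr]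
  -- trace of ρ - σ is 0
  have sumlam : ∑ i, lam i = 0 := by
    have h1 : (ρ - σ).trace = ∑ i, (lam i : ℂ) := by
      rw [hspec, Matrix.trace_mul_cycle, hUU, one_mul, Matrix.trace_diagonal]
    have h2 : (ρ - σ).trace = 0 := by rw [Matrix.trace_sub, hρ1, hσ1, sub_self]
    rw [h2] at h1
    exact_mod_cast h1.symm
  -- trace norm equals sum of abs eigenvalues
  set t := ∑ i, |lam i| with ht
  have hmulU : ∀ A B : Matrix (Fin d) (Fin d) ℂ,
      (U * A * Uᴴ) * (U * B * Uᴴ) = U * (A * B) * Uᴴ := by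
    intro A B
    have e1 : (U * A * Uᴴ) * (U * B * Uᴴ) = U * A * (Uᴴ * U) * B * Uᴴ := by noncomm_ring
    rw [e1, hUU, mul_one, mul_assoc U A B]
  have hTN : traceNorm (ρ - σ) = t := by
    have hdg : Matrix.PosSemidef (Matrix.diagonal (fun i => ((|lam i| : ℝ) : ℂ))) :=
      Matrix.PosSemidef.diagonal fun i => by
        simp only [Pi.zero_apply]; rw [Complex.zero_le_real]; exact abs_nonneg _
    have hS : Matrix.PosSemidef (U * Matrix.diagonal (fun i => ((|lam i| : ℝ) : ℂ)) * Uᴴ) :=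
      hdg.mul_mul_conjTranspose_same U
    have hsq : (U * Matrix.diagonal (fun i => ((|lam i| : ℝ) : ℂ)) * Uᴴ) ^ 2
        = (ρ - σ)ᴴ * (ρ - σ) := by
      rw [pow_two, h.eq, hmulU]
      conv_rhs => rw [hspec]
      rw [hmulU, Matrix.diagonal_mul_diagonal, Matrix.diagonal_mul_diagonal]
      have : (fun i => ((|lam i| : ℝ) : ℂ) * ((|lam i| : ℝ) : ℂ))
          = fun i => ((lam i : ℝ) : ℂ) * ((lam i : ℝ) : ℂ) := by
        funext i
        rw [← Complex.ofReal_mul, ← Complex.ofReal_mul, ← sq, ← sq, sq_abs]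
      rw [this]
    have hP := Matrix.posSemidef_conjTranspose_mul_self (ρ - σ)
    set V := (hP.1.eigenvectorUnitary : Matrix (Fin d) (Fin d) ℂ) with hV
    set D := Matrix.diagonal (((↑) : ℝ → ℂ) ∘ Real.sqrt ∘ hP.1.eigenvalues) with hD
    have hVV : Vᴴ * V = 1 := by
      exact (Matrix.mem_unitaryGroup_iff').mp hP.1.eigenvectorUnitary.2
    have hX : Matrix.PosSemidef (V * D * Vᴴ) :=
      (Matrix.PosSemidef.diagonal fun i => by
        simp only [Pi.zero_apply, Function.comp_apply]; rw [Complex.zero_le_real]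
        exact Real.sqrt_nonneg _).mul_mul_conjTranspose_same V
    have hXsq : (V * D * Vᴴ) * (V * D * Vᴴ) = (ρ - σ)ᴴ * (ρ - σ) := by
      have e1 : (V * D * Vᴴ) * (V * D * Vᴴ) = V * D * (Vᴴ * V) * D * Vᴴ := by noncomm_ring
      rw [e1, hVV, mul_one, mul_assoc V D D, hD, Matrix.diagonal_mul_diagonal]
      conv_rhs => rw [hP.1.spectral_theorem]
      congr 3
      funext i
      simp only [Function.comp_apply]
      rw [← Complex.ofReal_mul, Real.mul_self_sqrt (hP.eigenvalues_nonneg i)]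
      rfl
    have heq : V * D * Vᴴ = U * Matrix.diagonal (fun i => ((|lam i| : ℝ) : ℂ)) * Uᴴ := by
      open scoped MatrixOrder in
      exact (CFC.mul_self_eq_mul_self_iff _ _ hX.nonneg hS.nonneg).mp (by rw [hXsq, ← hsq, pow_two])
    show (V * D * Vᴴ).trace.re = t
    rw [heq, Matrix.trace_mul_cycle, hUU, one_mul, Matrix.trace_diagonal,
      ht, ← Complex.ofReal_sum]
    exact Complex.ofReal_re _
  set s := ∑ i, (if 0 < lam i then lam i else 0) with hs
  have h2s : 2 * s = t := by
    have : 2 * s = (∑ i, lam i) + t := by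
      rw [hs, ht, Finset.mul_sum, ← Finset.sum_add_distrib]
      refine Finset.sum_congr rfl fun i _ => ?_
      by_cases hi : 0 < lam i
      · rw [if_pos hi, abs_of_pos hi]; ring
      · rw [if_neg hi, abs_of_nonpos (not_lt.mp hi)]; ring
    rw [this, sumlam, zero_add]
  -- success probability expansion
  have expand : ∀ B : Matrix (Fin d) (Fin d) ℂ,
      (ρ * B).trace + (σ * (1 - B)).trace = 1 + ((ρ - σ) * B).trace := by
    intro B
    rw [Matrix.mul_sub, Matrix.mul_one, Matrix.trace_sub, hσ1, Matrix.sub_mul,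
      Matrix.trace_sub]
    ring
  constructor
  · -- equality for Mp
    have hMpd : Uᴴ * Mp * U = Matrix.diagonal (fun i => if 0 < lam i then (1:ℂ) else 0) := by
      rw [hMp]
      have e1 : Uᴴ * (U * Matrix.diagonal (fun i => if 0 < lam i then (1:ℂ) else 0) * Uᴴ) * U
          = (Uᴴ * U) * Matrix.diagonal (fun i => if 0 < lam i then (1:ℂ) else 0) * (Uᴴ * U) := by
        noncomm_ring
      rw [e1, hUU, one_mul, mul_one]
    have htr : ((ρ - σ) * Mp).trace = (s : ℂ) := by
      rw [key, hMpd, hs]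
      push_cast
      refine Finset.sum_congr rfl fun i _ => ?_
      by_cases hi : 0 < lam i
      · simp [Matrix.diagonal, hi]
      · simp [Matrix.diagonal, hi]
    rw [expand, htr, hTN]
    have hst : s = t / 2 := by linarith
    rw [hst]
    push_cast
    ring
  · -- optimality
    intro M hM hM1
    have hN : Matrix.PosSemidef (Uᴴ * M * U) := hM.conjTranspose_mul_mul_same U
    have hN1 : Matrix.PosSemidef (1 - Uᴴ * M * U) := by
      have h0 := hM1.conjTranspose_mul_mul_same U
      have e1 : Uᴴ * (1 - M) * U = 1 - Uᴴ * M * U := by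
        rw [Matrix.mul_sub, Matrix.mul_one, Matrix.sub_mul, hUU]
      rwa [e1] at h0
    have hdiag : ∀ (N : Matrix (Fin d) (Fin d) ℂ), N.PosSemidef → ∀ i,
        0 ≤ (N i i).re ∧ (N i i).im = 0 := by
      intro N hNp i
      have := hNp.diag_nonneg (i := i)
      simp [Complex.le_def, Matrix.mulVec, dotProduct, Pi.single_apply,
        Finset.sum_ite_eq] at this ⊢
      exact ⟨this.1, this.2.symm⟩
    set c : Fin d → ℂ := fun i => (Uᴴ * M * U) i i with hc
    have hc0 : ∀ i, 0 ≤ (c i).re := fun i => (hdiag _ hN i).1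
    have hc1 : ∀ i, (c i).re ≤ 1 := by
      intro i
      have := (hdiag _ hN1 i).1
      simp only [Matrix.sub_apply, Matrix.one_apply_eq, Complex.sub_re, Complex.one_re] at this
      linarith
    have hval : ((1/2 : ℂ) * ((ρ * M).trace + (σ * (1 - M)).trace)).re
        = 1/2 + 1/2 * ∑ i, lam i * (c i).re := by
      rw [expand, key]
      have : (∑ i, (lam i : ℂ) * ((Uᴴ * M * U) i i)).re = ∑ i, lam i * (c i).re := by
        rw [Complex.re_sum]
        exact Finset.sum_congr rfl fun i _ => Complex.re_ofReal_mul _ _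
      simp [Complex.mul_re, Complex.add_re, this]
      ring
    rw [hval, hTN]
    have hbound : ∑ i, lam i * (c i).re ≤ s := by
      rw [hs]
      refine Finset.sum_le_sum fun i _ => ?_
      by_cases hi : 0 < lam i
      · rw [if_pos hi]
        calc lam i * (c i).re ≤ lam i * 1 := by
              exact mul_le_mul_of_nonneg_left (hc1 i) hi.le
          _ = lam i := mul_one _
      · rw [if_neg hi]
        exact mul_nonpos_of_nonpos_of_nonneg (not_lt.mp hi) (hc0 i)
    linarith
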